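/- Let p ∈ ℝ[t] and let A = D_x P be an entrywise nonnegative n-by-n monomial matrix with Frobenius normal form Qᵀ A Q = K_{x_1} ⊕ ⋯ ⊕ K_{x_k} (Q a permutation matrix, x_i ∈ ℝ^{n_i} the blocks of Qᵀx, n_1 + ⋯ + n_k = n). Then p(A) = Q · ( ⊕_{i=1}^k Σ_{r=0}^{n_i−1} [ p_{(r,n_i)}(α_{x_i}^{1/n_i}) / α_{x_i}^{r/n_i} ] · K_{x_i}^r ) · Qᵀ. -/

import Mathlib

open Matrix

/-- The `m`-by-`m` cyclic permutation matrix `C_m` with `(i,j)`-entry `δ_{π(i),j}`,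
where `π(i) = (i mod m) + 1` (realized 0-based by `finRotate m : i ↦ i + 1`). -/
noncomputable def cycMat (m : ℕ) : Matrix (Fin m) (Fin m) ℝ :=
  (finRotate m).permMatrix ℝ

/-- `K_y := D_y C_m` for `y ∈ ℝ^m`. -/
noncomputable def Kmat {m : ℕ} (y : Fin m → ℝ) : Matrix (Fin m) (Fin m) ℝ :=
  Matrix.diagonal y * cycMat m

/-- The `r mod m`-part of `p`: `p_{(r,m)}(t) := Σ_{k ≤ deg p, k mod m = r} a_k t^k`. -/
noncomputable def polyPart (p : Polynomial ℝ) (m r : ℕ) : Polynomial ℝ :=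
  ∑ k ∈ Finset.range (p.natDegree + 1),
    if k % m = r then Polynomial.C (p.coeff k) * Polynomial.X ^ k else 0


section AuxLemmas

open Polynomial

lemma myPermMatrix_one {n : ℕ} :
    ((1 : Equiv.Perm (Fin n)).permMatrix ℝ) = (1 : Matrix (Fin n) (Fin n) ℝ) := by
  have : (1 : Equiv.Perm (Fin n)) = Equiv.refl (Fin n) := rfl
  simp [Equiv.Perm.permMatrix, this, Equiv.toPEquiv_refl, PEquiv.toMatrix_refl]

lemma myTranspose_permMatrix {n : ℕ} (τ : Equiv.Perm (Fin n)) :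
    (τ.permMatrix ℝ)ᵀ = (τ⁻¹).permMatrix ℝ := by
  have : (τ⁻¹ : Equiv.Perm (Fin n)) = (τ : Fin n ≃ Fin n).symm := rfl
  simp [Equiv.Perm.permMatrix, this, ← PEquiv.toMatrix_symm, Equiv.toPEquiv_symm]

lemma myPermMatrix_mul_permMatrix {n : ℕ} (σ τ : Equiv.Perm (Fin n)) :
    σ.permMatrix ℝ * τ.permMatrix ℝ = (τ * σ).permMatrix ℝ := by
  have : (τ * σ : Equiv.Perm (Fin n)) = (σ : Fin n ≃ Fin n).trans τ := rfl
  simp [Equiv.Perm.permMatrix, this, ← PEquiv.toMatrix_trans, ← Equiv.toPEquiv_trans]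

lemma myPermMatrix_mulVec {n : ℕ} (σ : Equiv.Perm (Fin n)) (x : Fin n → ℝ) (a : Fin n) :
    (σ.permMatrix ℝ *ᵥ x) a = x (σ a) := by
  simp [Matrix.mulVec, Equiv.Perm.permMatrix, PEquiv.toMatrix_apply, Equiv.toPEquiv_apply,
    dotProduct]

lemma myPermMatrix_mul_diagonal {n : ℕ} (σ : Equiv.Perm (Fin n)) (y : Fin n → ℝ) :
    σ.permMatrix ℝ * Matrix.diagonal y
      = Matrix.diagonal (fun i => y (σ i)) * σ.permMatrix ℝ := by
  ext i j
  rw [Matrix.mul_diagonal, Matrix.diagonal_mul]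
  simp only [Equiv.Perm.permMatrix, PEquiv.toMatrix_apply, Equiv.toPEquiv_apply, Option.mem_def,
    Option.some.injEq]
  split_ifs with h
  · rw [h]; ring
  · ring

lemma myKmat_pow_aux {n : ℕ} (y : Fin n → ℝ) (σ : Equiv.Perm (Fin n)) (s : ℕ) :
    (Matrix.diagonal y * σ.permMatrix ℝ) ^ s
      = Matrix.diagonal (fun i => ∏ t ∈ Finset.range s, y ((σ ^ t) i)) * (σ ^ s).permMatrix ℝ := by
  induction s with
  | zero => simp [myPermMatrix_one]
  | succ s ih =>
      simp_rw [Finset.prod_range_succ]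
      rw [pow_succ, ih, mul_assoc, ← mul_assoc ((σ ^ s).permMatrix ℝ),
        myPermMatrix_mul_diagonal, mul_assoc, myPermMatrix_mul_permMatrix, ← mul_assoc,
        Matrix.diagonal_mul_diagonal, ← pow_succ']

open Fin.NatCast in
lemma finRotate_pow_apply {m : ℕ} (t : ℕ) (i : Fin (m + 1)) :
    ((finRotate (m + 1)) ^ t) i = i + (t : Fin (m + 1)) := by
  induction t with
  | zero => simp
  | succ t ih =>
      rw [pow_succ', Equiv.Perm.mul_apply, ih, finRotate_succ_apply]
      push_cast
      rw [add_assoc]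

open Fin.NatCast in
lemma myKmat_pow_card {m : ℕ} (hm : 0 < m) (y : Fin m → ℝ) :
    Kmat y ^ m = (∏ l, y l) • (1 : Matrix (Fin m) (Fin m) ℝ) := by
  obtain ⟨m', rfl⟩ := Nat.exists_eq_succ_of_ne_zero hm.ne'
  rw [Kmat, cycMat, myKmat_pow_aux]
  have h1 : (finRotate (m' + 1)) ^ (m' + 1) = 1 := by
    ext i
    simp [finRotate_pow_apply, Fin.natCast_self]
  have h2 : (fun i : Fin (m' + 1) =>
      ∏ t ∈ Finset.range (m' + 1), y ((finRotate (m' + 1) ^ t) i)) = fun _ => ∏ l, y l := by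
    funext i
    rw [← Fin.prod_univ_eq_prod_range]
    have ht : ∀ t : Fin (m' + 1), y ((finRotate (m' + 1) ^ (t : ℕ)) i) = y (i + t) := by
      intro t; rw [finRotate_pow_apply, Fin.cast_val_eq_self]
    simp_rw [ht]
    exact Equiv.prod_comp (Equiv.addLeft i) y
  rw [h1, myPermMatrix_one, mul_one, h2]
  ext i j
  simp [Matrix.diagonal_apply, Matrix.one_apply, Matrix.smul_apply]

lemma myKmat_pow {m : ℕ} (hm : 0 < m) (y : Fin m → ℝ) (s : ℕ) :
    Kmat y ^ s = (∏ l, y l) ^ (s / m) • Kmat y ^ (s % m) := by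
  conv_lhs => rw [← Nat.div_add_mod s m]
  rw [pow_add, pow_mul, myKmat_pow_card hm, _root_.smul_pow, one_pow, smul_mul_assoc, one_mul]

lemma myConj_pow {n : ℕ} (Q B : Matrix (Fin n) (Fin n) ℝ)
    (h1 : Q * Qᵀ = 1) (h2 : Qᵀ * Q = 1) (s : ℕ) :
    (Q * B * Qᵀ) ^ s = Q * B ^ s * Qᵀ := by
  induction s with
  | zero => simp [h1]
  | succ s ih =>
      rw [pow_succ, ih, pow_succ]
      simp only [mul_assoc]
      rw [← mul_assoc Qᵀ Q, h2, one_mul]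

lemma myAeval_conj {n : ℕ} (Q B : Matrix (Fin n) (Fin n) ℝ)
    (h1 : Q * Qᵀ = 1) (h2 : Qᵀ * Q = 1) (p : ℝ[X]) :
    aeval (Q * B * Qᵀ) p = Q * aeval B p * Qᵀ := by
  induction p using Polynomial.induction_on' with
  | add q r hq hr => simp [map_add, hq, hr, Matrix.mul_add, Matrix.add_mul]
  | monomial s a =>
      simp only [aeval_monomial, Algebra.algebraMap_eq_smul_one, smul_mul_assoc, one_mul,
        myConj_pow Q B h1 h2, Matrix.mul_smul, Matrix.smul_mul]

lemma myAeval_blockDiagonal' {k : ℕ} {ns : Fin k → ℕ}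
    (f : ∀ i, Matrix (Fin (ns i)) (Fin (ns i)) ℝ) (p : ℝ[X]) :
    aeval (Matrix.blockDiagonal' f) p = Matrix.blockDiagonal' (fun i => aeval (f i) p) := by
  induction p using Polynomial.induction_on' with
  | add q r hq hr =>
      simp only [map_add, hq, hr, ← Matrix.blockDiagonal'_add]
      rfl
  | monomial s a =>
      simp only [aeval_monomial, Algebra.algebraMap_eq_smul_one, smul_mul_assoc, one_mul,
        ← Matrix.blockDiagonal'_pow, ← Matrix.blockDiagonal'_smul]
      rfl

lemma myAeval_submatrix {α β : Type*} [Fintype α] [Fintype β] [DecidableEq α] [DecidableEq β]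
    (e : α ≃ β) (M : Matrix α α ℝ) (p : ℝ[X]) :
    aeval (M.submatrix e.symm e.symm) p = (aeval M p).submatrix e.symm e.symm := by
  have := Polynomial.aeval_algHom_apply (Matrix.reindexAlgEquiv ℝ ℝ e) M p
  simpa [Matrix.reindexAlgEquiv_apply, Matrix.reindex_apply] using this

lemma myAeval_Kmat {m : ℕ} (hm : 0 < m) (y : Fin m → ℝ) (hy : 0 < ∏ l, y l) (p : Polynomial ℝ) :
    Polynomial.aeval (Kmat y) p =
      ∑ r ∈ Finset.range m,
        ((polyPart p m r).eval ((∏ l, y l) ^ ((1 : ℝ) / (m : ℝ))) /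
            (∏ l, y l) ^ ((r : ℝ) / (m : ℝ))) • Kmat y ^ r := by
  set α := ∏ l, y l with hα
  have hm' : (m : ℝ) ≠ 0 := Nat.cast_ne_zero.mpr hm.ne'
  set N := p.natDegree + 1 with hN
  have hpow : ∀ s : ℕ,
      (α ^ ((1:ℝ)/(m:ℝ))) ^ s / α ^ (((s % m : ℕ) : ℝ)/(m:ℝ)) = α ^ (s / m) := by
    intro s
    rw [← Real.rpow_natCast (α ^ ((1:ℝ)/(m:ℝ))) s, ← Real.rpow_mul hy.le,
      ← Real.rpow_sub hy]
    have hs : (1:ℝ)/(m:ℝ) * (s:ℝ) - ((s % m : ℕ):ℝ)/(m:ℝ) = ((s / m : ℕ) : ℝ) := by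
      have h2 : (s:ℝ) = (m:ℝ) * ((s/m : ℕ):ℝ) + ((s % m : ℕ):ℝ) := by
        exact_mod_cast (Nat.div_add_mod s m).symm
      rw [h2]; field_simp; ring
    rw [hs]; try rw [Real.rpow_natCast]
  have hcoef : ∀ r, (polyPart p m r).eval (α ^ ((1:ℝ)/(m:ℝ))) / α ^ ((r:ℝ)/(m:ℝ))
      = ∑ s ∈ Finset.range N, if s % m = r then p.coeff s * α ^ (s / m) else 0 := by
    intro r
    rw [polyPart, Polynomial.eval_finset_sum, Finset.sum_div]
    refine Finset.sum_congr rfl fun s _ => ?_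
    split_ifs with h
    · rw [Polynomial.eval_mul, Polynomial.eval_C, Polynomial.eval_pow, Polynomial.eval_X,
        mul_div_assoc, ← h, hpow s]
    · simp
  calc Polynomial.aeval (Kmat y) p
      = ∑ s ∈ Finset.range N, p.coeff s • Kmat y ^ s := Polynomial.aeval_eq_sum_range _
    _ = ∑ s ∈ Finset.range N, ∑ r ∈ Finset.range m,
          (if s % m = r then (p.coeff s * α ^ (s / m)) • Kmat y ^ r else 0) := by
        refine Finset.sum_congr rfl fun s _ => ?_
        rw [Finset.sum_ite_eq (Finset.range m) (s % m)
          (fun r => (p.coeff s * α ^ (s / m)) • Kmat y ^ r),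
          if_pos (Finset.mem_range.mpr (Nat.mod_lt s hm))]
        rw [myKmat_pow hm y s, smul_smul]
    _ = ∑ r ∈ Finset.range m,
          ((polyPart p m r).eval (α ^ ((1:ℝ)/(m:ℝ))) / α ^ ((r:ℝ)/(m:ℝ))) • Kmat y ^ r := by
        rw [Finset.sum_comm]
        refine Finset.sum_congr rfl fun r _ => ?_
        rw [hcoef r, Finset.sum_smul]
        refine Finset.sum_congr rfl fun s _ => ?_
        rw [ite_smul, zero_smul]

end AuxLemmas

/-- Let `p ∈ ℝ[t]` and let `A = D_x P_σ ≥ 0` be an `n`-by-`n`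
nonnegative monomial matrix (`x > 0` entrywise) with Frobenius normal form
`Qᵀ A Q = K_{y_1} ⊕ ⋯ ⊕ K_{y_k}`, where `Q = P_τ` is a permutation matrix and the
`y_i ∈ ℝ^{n_i}` are the consecutive blocks of `y = Qᵀ x` (the block structure being
recorded by the order-preserving bijection `e : Σ i, Fin (n_i) ≃ Fin n`,
`e ⟨i, j⟩ = n_1 + ⋯ + n_{i-1} + j`). Then
`p(A) = Q (⊕_{i=1}^k Σ_{r=0}^{n_i-1} [ p_{(r,n_i)}(α_{y_i}^{1/n_i}) / α_{y_i}^{r/n_i} ] • K_{y_i}^r) Qᵀ`. -/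
theorem aeval_monomial_matrix {n : ℕ} (p : Polynomial ℝ)
    (x : Fin n → ℝ) (hx : ∀ i, 0 < x i) (σ : Equiv.Perm (Fin n))
    (A : Matrix (Fin n) (Fin n) ℝ) (hA : A = Matrix.diagonal x * σ.permMatrix ℝ)
    (k : ℕ) (ns : Fin k → ℕ) (hns : ∀ i, 0 < ns i) (hsum : (∑ i, ns i) = n)
    (τ : Equiv.Perm (Fin n)) (Q : Matrix (Fin n) (Fin n) ℝ) (hQ : Q = τ.permMatrix ℝ)
    (e : (Σ i : Fin k, Fin (ns i)) ≃ Fin n)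
    (he : ∀ (i : Fin k) (j : Fin (ns i)),
      ((e ⟨i, j⟩ : Fin n) : ℕ) = (∑ l ∈ Finset.Iio i, ns l) + (j : ℕ))
    (y : (i : Fin k) → Fin (ns i) → ℝ)
    (hy : ∀ (i : Fin k) (j : Fin (ns i)), y i j = (Qᵀ *ᵥ x) (e ⟨i, j⟩))
    (hFNF : Qᵀ * A * Q =
      (Matrix.blockDiagonal' fun i => Kmat (y i)).submatrix e.symm e.symm) :
    Polynomial.aeval A p =
      Q * (Matrix.blockDiagonal' fun i =>
            ∑ r ∈ Finset.range (ns i),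
              ((polyPart p (ns i) r).eval ((∏ l, y i l) ^ ((1 : ℝ) / (ns i : ℝ))) /
                  (∏ l, y i l) ^ ((r : ℝ) / (ns i : ℝ))) • Kmat (y i) ^ r).submatrix
          e.symm e.symm * Qᵀ := by
  have hQ1 : Q * Qᵀ = 1 := by
    rw [hQ, myTranspose_permMatrix, myPermMatrix_mul_permMatrix, inv_mul_cancel, myPermMatrix_one]
  have hQ2 : Qᵀ * Q = 1 := by
    rw [hQ, myTranspose_permMatrix, myPermMatrix_mul_permMatrix, mul_inv_cancel, myPermMatrix_one]
  have hprod : ∀ i, 0 < ∏ l, y i l := by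
    intro i
    refine Finset.prod_pos fun j _ => ?_
    rw [hy i j, hQ, myTranspose_permMatrix, myPermMatrix_mulVec]
    exact hx _
  have hA' : A = Q * ((Matrix.blockDiagonal' fun i => Kmat (y i)).submatrix e.symm e.symm) * Qᵀ := by
    rw [← hFNF]
    simp only [← mul_assoc]
    rw [hQ1, one_mul, mul_assoc, hQ1, mul_one]
  rw [hA', myAeval_conj _ _ hQ1 hQ2, myAeval_submatrix, myAeval_blockDiagonal']
  have hfun : (fun i => Polynomial.aeval (Kmat (y i)) p)
      = fun i => ∑ r ∈ Finset.range (ns i),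
          ((polyPart p (ns i) r).eval ((∏ l, y i l) ^ ((1 : ℝ) / (ns i : ℝ))) /
              (∏ l, y i l) ^ ((r : ℝ) / (ns i : ℝ))) • Kmat (y i) ^ r :=
    funext fun i => myAeval_Kmat (hns i) (y i) (hprod i) p
  rw [hfun]
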